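/- Let p = 1.409. It is impossible to have 11 points in the annulus {P : 1.5 ≤ |P| ≤ 1 + p} with pairwise distances at least p. (Indeed 11·Φ_p(1.5, 1+p) > 360°.) -/

import Mathlib

open Real

lemma aux_cos_05713 : (0.8397:ℝ) ≤ Real.cos 0.5713 := by
  have h1 : (0.5713:ℝ) = 2 * 0.28565 := by norm_num
  have hb := Real.sin_bound (x := 0.28565) (by rw [abs_of_nonneg] <;> norm_num)
  have hs0 : (0:ℝ) ≤ Real.sin 0.28565 :=
    Real.sin_nonneg_of_nonneg_of_le_pi (by norm_num) (by nlinarith [Real.pi_gt_three])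
  have hb' := abs_le.1 hb
  have hs : Real.sin 0.28565 ≤ 0.2822 := by
    have h2 := hb'.2
    rw [abs_of_nonneg (by norm_num : (0:ℝ) ≤ 0.28565)] at h2
    nlinarith
  have hc2 := Real.sin_sq_add_cos_sq (0.28565:ℝ)
  rw [h1, Real.cos_two_mul]
  nlinarith

lemma aux_gap {x : ℝ} (hx : 0 ≤ x) (hc : Real.cos x ≤ 0.8397) : (0.5713:ℝ) ≤ x := by
  by_contra h
  push_neg at h
  have := Real.cos_lt_cos_of_nonneg_of_le_pi hx (by nlinarith [Real.pi_gt_three]) h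
  linarith [aux_cos_05713]

/-- No 11 points with pairwise distances ≥ p = 1.409 in the annulus 1.5 ≤ ρ ≤ 1 + p. -/
theorem stmt_15 :
    ¬ ∃ X : Fin 11 → EuclideanSpace ℝ (Fin 2),
      Function.Injective X ∧
      (∀ i, (1.5 : ℝ) ≤ ‖X i‖ ∧ ‖X i‖ ≤ 1 + 1.409) ∧
      (∀ i j, i ≠ j → (1.409 : ℝ) ≤ dist (X i) (X j)) := by
  rintro ⟨X, -, hnorm, hdist⟩
  set z : Fin 11 → ℂ := fun i => ⟨X i 0, X i 1⟩ with hz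
  have habs : ∀ i, ‖z i‖ = ‖X i‖ := by
    intro i
    rw [Complex.norm_def, Complex.normSq_apply, EuclideanSpace.norm_eq, Fin.sum_univ_two]
    simp only [hz, Real.norm_eq_abs, sq_abs]
    ring_nf
  have hzne : ∀ i, z i ≠ 0 := by
    intro i h
    have h2 := habs i
    rw [h] at h2
    simp only [map_zero, norm_zero] at h2
    have := (hnorm i).1
    linarith [h2 ▸ this]
  have hd2 : ∀ i j, i ≠ j →
      (1.409:ℝ)^2 ≤ ((z i).re - (z j).re)^2 + ((z i).im - (z j).im)^2 := by
    intro i j hij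
    have h := hdist i j hij
    rw [EuclideanSpace.dist_eq, Fin.sum_univ_two] at h
    have hnn : (0:ℝ) ≤ dist (X i 0) (X j 0) ^ 2 + dist (X i 1) (X j 1) ^ 2 := by positivity
    have hsq := Real.sq_sqrt hnn
    have h2 : (1.409:ℝ)^2 ≤ dist (X i 0) (X j 0) ^ 2 + dist (X i 1) (X j 1) ^ 2 := by
      nlinarith [Real.sqrt_nonneg (dist (X i 0) (X j 0) ^ 2 + dist (X i 1) (X j 1) ^ 2)]
    simp only [Real.dist_eq] at h2
    simpa only [hz, sq_abs] using h2
  have key : ∀ i j, i ≠ j → Real.cos (Complex.arg (z i) - Complex.arg (z j)) ≤ 0.8397 := by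
    intro i j hij
    have hai1 := (hnorm i).1; have hai2 := (hnorm i).2
    have haj1 := (hnorm j).1; have haj2 := (hnorm j).2
    rw [← habs i] at hai1 hai2
    rw [← habs j] at haj1 haj2
    rw [Real.cos_sub, Complex.cos_arg (hzne i), Complex.cos_arg (hzne j),
      Complex.sin_arg, Complex.sin_arg]
    have hsqi := Complex.sq_norm (z i)
    have hsqj := Complex.sq_norm (z j)
    rw [Complex.normSq_apply] at hsqi hsqj
    have hD := hd2 i j hij
    set a := ‖z i‖ with ha
    set b := ‖z j‖ with hbdef
    have hab : (0:ℝ) < a * b := by nlinarith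
    rw [div_mul_div_comm, div_mul_div_comm, ← add_div, div_le_iff₀ hab]
    nlinarith [mul_nonneg (by linarith : (0:ℝ) ≤ a - 1.5) (by linarith : (0:ℝ) ≤ b - 1.5),
      mul_nonneg (by linarith : (0:ℝ) ≤ 2.409 - a) (by linarith : (0:ℝ) ≤ 2.409 - b),
      mul_nonneg (by linarith : (0:ℝ) ≤ a - 1.5) (by linarith : (0:ℝ) ≤ 2.409 - b),
      mul_nonneg (by linarith : (0:ℝ) ≤ 2.409 - a) (by linarith : (0:ℝ) ≤ b - 1.5),
      mul_nonneg (by linarith : (0:ℝ) ≤ a - 1.5) (by linarith : (0:ℝ) ≤ 2.409 - a),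
      mul_nonneg (by linarith : (0:ℝ) ≤ b - 1.5) (by linarith : (0:ℝ) ≤ 2.409 - b)]
  set θ : Fin 11 → ℝ := fun i => Complex.arg (z i) with hθ
  set σ := Tuple.sort θ with hσ
  set y : Fin 11 → ℝ := θ ∘ σ with hy
  have hmono : Monotone y := Tuple.monotone_sort θ
  have step : ∀ k l : Fin 11, k < l → (0.5713:ℝ) ≤ y l - y k := by
    intro k l hkl
    have hne : σ l ≠ σ k := fun h => (ne_of_gt hkl) (σ.injective h)
    have h1 := key (σ l) (σ k) hne
    have h2 : y k ≤ y l := hmono hkl.le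
    exact aux_gap (by simpa only [hy, Function.comp] using sub_nonneg.2 h2)
      (by simpa only [hy, Function.comp] using h1)
  have harg_le : y 10 ≤ π := Complex.arg_le_pi _
  have harg_gt : -π < y 0 := Complex.neg_pi_lt_arg _
  have wrap : (0.5713:ℝ) ≤ 2*π - (y 10 - y 0) := by
    have hne : σ 10 ≠ σ 0 := fun h => by
      have := σ.injective h
      exact absurd this (by decide)
    have h1 := key (σ 10) (σ 0) hne
    have h1' : Real.cos (y 10 - y 0) ≤ 0.8397 := by
      simpa only [hy, Function.comp] using h1
    have hcos : Real.cos (2*π - (y 10 - y 0)) ≤ 0.8397 := by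
      rw [Real.cos_sub, Real.cos_two_pi, Real.sin_two_pi]
      simpa using h1'
    exact aux_gap (by linarith) hcos
  have g1 := step 0 1 (by decide)
  have g2 := step 1 2 (by decide)
  have g3 := step 2 3 (by decide)
  have g4 := step 3 4 (by decide)
  have g5 := step 4 5 (by decide)
  have g6 := step 5 6 (by decide)
  have g7 := step 6 7 (by decide)
  have g8 := step 7 8 (by decide)
  have g9 := step 8 9 (by decide)
  have g10 := step 9 10 (by decide)
  linarith [Real.pi_lt_d6]
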